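/- Suppose q₁ and q₂ are nonvanishing on U. Then the following are equivalent: (i) k₂·q₁·∂₁k₁ + k₁·q₂·∂₂k₁ = 0 and k₂·q₁·∂₁k₂ + k₁·q₂·∂₂k₂ = 0 hold at every point of U; (ii) the function k₁·k₂ is constant on U. (Proposition 5(b): for a surface which is not a moulding surface, the nets corresponding to the lines of curvature of the two central surfaces are both conjugate if and only if the surface has constant Gaussian curvature.) -/

import Mathlib

/-- Partial derivative in the first coordinate direction on ℝ². -/
noncomputable def pd1 (f : ℝ × ℝ → ℝ) (p : ℝ × ℝ) : ℝ := fderiv ℝ f p (1, 0)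

/-- Partial derivative in the second coordinate direction on ℝ². -/
noncomputable def pd2 (f : ℝ × ℝ → ℝ) (p : ℝ × ℝ) : ℝ := fderiv ℝ f p (0, 1)

lemma prod_mul_fderiv {k₁ k₂ : ℝ × ℝ → ℝ} {p : ℝ × ℝ} (h₁ : DifferentiableAt ℝ k₁ p)
    (h₂ : DifferentiableAt ℝ k₂ p) (v : ℝ × ℝ) :
    fderiv ℝ (fun y => k₁ y * k₂ y) p v = k₁ p * fderiv ℝ k₂ p v + k₂ p * fderiv ℝ k₁ p v := by
  rw [fderiv_fun_mul h₁ h₂]; simp [smul_eq_mul]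

/-- A map ℝ×ℝ → ℝ vanishing on the basis vectors is zero. -/
lemma clm_eq_zero (L : (ℝ × ℝ) →L[ℝ] ℝ) (h1 : L (1, 0) = 0) (h2 : L (0, 1) = 0) : L = 0 := by
  ext v
  · simpa using h1
  · simpa using h2

theorem stmt_1 (U : Set (ℝ × ℝ)) (hU : IsOpen U) (hUconn : IsConnected U)
    (k₁ k₂ q₁ q₂ : ℝ × ℝ → ℝ)
    (hk₁ : ∀ p ∈ U, DifferentiableAt ℝ k₁ p)
    (hk₂ : ∀ p ∈ U, DifferentiableAt ℝ k₂ p)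
    (hq₁ : ∀ p ∈ U, DifferentiableAt ℝ q₁ p)
    (hq₂ : ∀ p ∈ U, DifferentiableAt ℝ q₂ p)
    (codazzi₁ : ∀ p ∈ U, pd2 k₁ p = q₁ p * (k₁ p - k₂ p))
    (codazzi₂ : ∀ p ∈ U, pd1 k₂ p = q₂ p * (k₁ p - k₂ p))
    (hq₁ne : ∀ p ∈ U, q₁ p ≠ 0)
    (hq₂ne : ∀ p ∈ U, q₂ p ≠ 0) :
    (∀ p ∈ U, k₂ p * q₁ p * pd1 k₁ p + k₁ p * q₂ p * pd2 k₁ p = 0 ∧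
              k₂ p * q₁ p * pd1 k₂ p + k₁ p * q₂ p * pd2 k₂ p = 0) ↔
    (∃ c : ℝ, ∀ p ∈ U, k₁ p * k₂ p = c) := by
  set K : ℝ × ℝ → ℝ := fun y => k₁ y * k₂ y with hK
  have hKdiff : ∀ p ∈ U, DifferentiableAt ℝ K p := fun p hp => (hk₁ p hp).mul (hk₂ p hp)
  constructor
  · intro h
    -- fderiv of K vanishes on U
    have hfz : ∀ p ∈ U, fderiv ℝ K p = 0 := by
      intro p hp
      obtain ⟨h1, h2⟩ := h p hp
      have c1 := codazzi₁ p hp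
      have c2 := codazzi₂ p hp
      have e1 := prod_mul_fderiv (hk₁ p hp) (hk₂ p hp) (1, 0)
      have e2 := prod_mul_fderiv (hk₁ p hp) (hk₂ p hp) (0, 1)
      have hq1 := hq₁ne p hp
      have hq2 := hq₂ne p hp
      apply clm_eq_zero
      · -- q₁ * (fderiv K (1,0)) = 0
        have : q₁ p * fderiv ℝ K p (1, 0) = 0 := by
          rw [e1]
          simp only [pd1, pd2] at h1 c1 c2 ⊢
          linear_combination h1 - k₁ p * q₂ p * c1 + q₁ p * k₁ p * c2
        exact (mul_eq_zero.1 this).resolve_left hq1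
      · have : q₂ p * fderiv ℝ K p (0, 1) = 0 := by
          rw [e2]
          simp only [pd1, pd2] at h2 c1 c2 ⊢
          linear_combination h2 + q₂ p * k₂ p * c1 - k₂ p * q₁ p * c2
        exact (mul_eq_zero.1 this).resolve_left hq2
    -- K is locally constant on U, hence constant
    obtain ⟨p₀, hp₀⟩ := hUconn.nonempty
    refine ⟨K p₀, ?_⟩
    set S : Set (ℝ × ℝ) := {p | p ∈ U ∧ K p = K p₀} with hS
    set T : Set (ℝ × ℝ) := {p | p ∈ U ∧ K p ≠ K p₀} with hT
    have hSopen : IsOpen S := by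
      rw [isOpen_iff_mem_nhds]
      rintro p ⟨hpU, hpK⟩
      obtain ⟨ε, hε, hball⟩ := Metric.isOpen_iff.1 hU p hpU
      have hconst : ∀ q ∈ Metric.ball p ε, K q = K p₀ := by
        intro q hq
        have := (convex_ball p ε).is_const_of_fderivWithin_eq_zero
          (fun x hx => (hKdiff x (hball hx)).differentiableWithinAt)
          (fun x hx => by
            rw [fderivWithin_of_isOpen Metric.isOpen_ball hx, hfz x (hball hx)]) hq
          (Metric.mem_ball_self hε)
        rw [this, hpK]
      exact Filter.mem_of_superset (Metric.ball_mem_nhds p hε)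
        (fun q hq => ⟨hball hq, hconst q hq⟩)
    have hTopen : IsOpen T := by
      rw [isOpen_iff_mem_nhds]
      rintro p ⟨hpU, hpK⟩
      have hc : ContinuousAt K p := (hKdiff p hpU).continuousAt
      have : {x | K x ≠ K p₀} ∈ nhds p := hc.preimage_mem_nhds (isOpen_ne.mem_nhds hpK)
      exact Filter.inter_mem (hU.mem_nhds hpU) this
    have hUsub : U ⊆ S := by
      apply hUconn.isPreconnected.subset_left_of_subset_union hSopen hTopen
      · rw [Set.disjoint_iff]
        rintro x ⟨⟨_, h1⟩, ⟨_, h2⟩⟩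
        exact h2 h1
      · intro x hx
        by_cases hxx : K x = K p₀
        · exact Or.inl ⟨hx, hxx⟩
        · exact Or.inr ⟨hx, hxx⟩
      · exact ⟨p₀, hp₀, hp₀, rfl⟩
    exact fun p hp => (hUsub hp).2
  · rintro ⟨c, hc⟩ p hp
    have hfz : fderiv ℝ K p = 0 := by
      have : K =ᶠ[nhds p] fun _ => c :=
        Filter.eventuallyEq_of_mem (hU.mem_nhds hp) (fun x hx => hc x hx)
      rw [this.fderiv_eq, fderiv_fun_const]; rfl
    have e1 := prod_mul_fderiv (hk₁ p hp) (hk₂ p hp) (1, 0)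
    have e2 := prod_mul_fderiv (hk₁ p hp) (hk₂ p hp) (0, 1)
    rw [hfz] at e1 e2
    simp only [ContinuousLinearMap.zero_apply] at e1 e2
    have c1 := codazzi₁ p hp
    have c2 := codazzi₂ p hp
    simp only [pd1, pd2] at c1 c2 ⊢
    constructor
    · linear_combination -q₁ p * e1 + k₁ p * q₂ p * c1 - q₁ p * k₁ p * c2
    · linear_combination -q₂ p * e2 - k₂ p * q₂ p * c1 + k₂ p * q₁ p * c2
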